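/- The ring homomorphism j : O_F → E⁻¹O_F exhibits E⁻¹O_F as the localization of O_F at the multiplicative submonoid generated by the elements u_n (n ≥ 1), where u_n ∈ O_F has n-th component c_n and all other components equal to 1; that is, IsLocalization holds for j with respect to this submonoid (every u_n maps to a unit, every element of E⁻¹O_F can be written as j(y)·j(s)⁻¹ with s in the submonoid, and j(y) = j(y') implies s·y = s·y' for some s in the submonoid). -/

import Mathlib

open LaurentPolynomial

noncomputable section

/-- The ring `O_F = ∏_{n ≥ 1} ℚ[c_n]`. -/
abbrev OF : Type := ∀ _ : ℕ+, Polynomial ℚ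

/-- The product of Laurent polynomial rings `∏_{n ≥ 1} ℚ[c_n, c_n⁻¹]`. -/
abbrev LF : Type := ∀ _ : ℕ+, LaurentPolynomial ℚ

/-- The subring of `ℚ[c,c⁻¹]` of Laurent polynomials with no negative-degree terms. -/
def polyRange : Subring (LaurentPolynomial ℚ) :=
  (Polynomial.toLaurent (R := ℚ)).range

/-- `E⁻¹O_F` : sequences of Laurent polynomials which are polynomial at all but
finitely many indices. -/
def EinvOF : Subring LF where
  carrier := {f : LF | {n : ℕ+ | f n ∉ polyRange}.Finite}
  zero_mem' := by
    refine Set.finite_empty.subset fun n hn => ?_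
    simp only [Set.mem_setOf_eq, Pi.zero_apply] at hn
    exact hn (zero_mem _)
  one_mem' := by
    refine Set.finite_empty.subset fun n hn => ?_
    simp only [Set.mem_setOf_eq, Pi.one_apply] at hn
    exact hn (one_mem _)
  add_mem' := by
    intro a b ha hb
    refine (ha.union hb).subset fun n hn => ?_
    simp only [Set.mem_setOf_eq, Pi.add_apply] at hn
    by_contra h
    simp only [Set.mem_union, Set.mem_setOf_eq, not_or, not_not] at h
    exact hn (add_mem h.1 h.2)
  mul_mem' := by
    intro a b ha hb
    refine (ha.union hb).subset fun n hn => ?_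
    simp only [Set.mem_setOf_eq, Pi.mul_apply] at hn
    by_contra h
    simp only [Set.mem_union, Set.mem_setOf_eq, not_or, not_not] at h
    exact hn (mul_mem h.1 h.2)
  neg_mem' := by
    intro a ha
    refine ha.subset fun n hn => ?_
    simp only [Set.mem_setOf_eq, Pi.neg_apply] at hn
    simp only [Set.mem_setOf_eq]
    exact fun h => hn (neg_mem h)

lemma jFull_mem (f : OF) :
    (fun n => Polynomial.toLaurent (f n) : LF) ∈ EinvOF := by
  refine Set.finite_empty.subset fun n hn => ?_
  exact hn ⟨f n, rfl⟩

/-- The evident ring homomorphism `j : O_F → E⁻¹O_F`. -/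
def j : OF →+* EinvOF :=
  (Pi.ringHom fun n => (Polynomial.toLaurent (R := ℚ)).comp (Pi.evalRingHom _ n)).codRestrict
    EinvOF (fun f => jFull_mem f)

/-!
STATEMENT 1: `j : O_F → E⁻¹O_F` exhibits `E⁻¹O_F` as the localization of `O_F` at the
multiplicative submonoid generated by the elements `u_n` (`n ≥ 1`), where `u_n ∈ O_F` has
`n`-th component `c_n` and all other components equal to `1`.
-/

/-- The element `u_n ∈ O_F` whose `n`-th component is `c_n` and whose other components are `1`. -/
def u (n : ℕ+) : OF := fun m => if m = n then Polynomial.X else 1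

/-- The multiplicative submonoid of `O_F` generated by the `u_n`. -/
def Umon : Submonoid OF := Submonoid.closure (Set.range u)

instance : Algebra OF EinvOF := j.toAlgebra

lemma prod_u_apply (F : Finset ℕ+) (k : ℕ+ → ℕ) (m : ℕ+) :
    (∏ n ∈ F, u n ^ k n) m = if m ∈ F then Polynomial.X ^ k m else 1 := by
  classical
  rw [Finset.prod_apply]
  rw [show (fun n => (u n ^ k n) m) = fun n => if m = n then Polynomial.X ^ k n else 1 by
    funext n; simp only [Pi.pow_apply, u]; split <;> simp, Finset.prod_ite_eq]

lemma j_apply (x : OF) (n : ℕ+) : ((j x : EinvOF) : LF) n = Polynomial.toLaurent (x n) := rfl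

lemma isUnit_j_u (n : ℕ+) : IsUnit (j (u n)) := by
  have hv : (fun m => if m = n then (T (-1) : LaurentPolynomial ℚ) else 1 : LF) ∈ EinvOF := by
    refine (Set.finite_singleton n).subset fun m hm => ?_
    simp only [Set.mem_setOf_eq] at hm
    by_contra h
    simp only [Set.mem_singleton_iff] at h
    rw [if_neg h] at hm
    exact hm (one_mem _)
  refine IsUnit.of_mul_eq_one ⟨_, hv⟩ ?_
  refine Subtype.ext (funext fun m => ?_)
  show Polynomial.toLaurent (u n m) * (if m = n then (T (-1) : LaurentPolynomial ℚ) else 1) = 1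
  simp only [u]
  split
  · simp only [if_pos, Polynomial.toLaurent_X, ← T_add]
    norm_num
  · simp

lemma j_injective : Function.Injective j := by
  intro x y h
  funext n
  have := congrArg (fun f : EinvOF => (f : LF) n) h
  exact Polynomial.toLaurent_injective this

theorem stmt1 : algebraMap OF EinvOF = j ∧ IsLocalization Umon EinvOF := by
  classical
  refine ⟨rfl, ?_⟩
  constructor
  constructor
  · -- map_units
    rintro ⟨s, hs⟩
    show IsUnit (j s)
    refine Submonoid.closure_induction ?_ ?_ ?_ hs
    · rintro x ⟨n, rfl⟩; exact isUnit_j_u n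
    · simp only [map_one]; exact isUnit_one
    · intro a b _ _ ha hb; rw [map_mul]; exact ha.mul hb
  · -- surj
    intro z
    have hz : {n : ℕ+ | (z : LF) n ∉ polyRange}.Finite := z.prop
    have H : ∀ n : ℕ+, ∃ (k : ℕ) (p : Polynomial ℚ),
        Polynomial.toLaurent p = (z : LF) n * T (k : ℤ) := fun n => exists_T_pow _
    choose k p hp using H
    set F := hz.toFinset with hF
    set s : OF := ∏ n ∈ F, u n ^ k n with hsdef
    have hsU : s ∈ Umon := by
      refine Submonoid.prod_mem _ fun n _ => Submonoid.pow_mem _ ?_ _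
      exact Submonoid.subset_closure ⟨n, rfl⟩
    have hmem : ∀ m : ℕ+, ((z * j s : EinvOF) : LF) m ∈ polyRange := by
      intro m
      have : ((z * j s : EinvOF) : LF) m = (z : LF) m * Polynomial.toLaurent (s m) := rfl
      rw [this, hsdef, prod_u_apply]
      by_cases hm : m ∈ F
      · rw [if_pos hm, Polynomial.toLaurent_X_pow]
        exact ⟨p m, hp m⟩
      · rw [if_neg hm, map_one, mul_one]
        have : ¬ (z : LF) m ∉ polyRange := by
          intro hcon
          exact hm (hz.mem_toFinset.2 hcon)
        exact not_not.1 this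
    refine ⟨⟨fun m => (hmem m).choose, ⟨s, hsU⟩⟩, ?_⟩
    show z * j s = j _
    refine Subtype.ext (funext fun m => ?_)
    exact ((hmem m).choose_spec).symm
  · -- exists_of_eq
    intro x y h
    exact ⟨1, by rw [j_injective h]⟩

end
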